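/- Let λ, m, r, u, v, k be positive real numbers with muv = kλr (i.e., R₀ = 1), and let τ ≥ 0. If y = a + bi is a complex number with a ≥ 0 and y ≠ 0, then y² + (u+v)y + uv − uv·e^{−τy} ≠ 0. Consequently, y = 0 is the unique root with nonnegative real part of the equation y² + (u+v)y + uv − uv·e^{−τy} = 0. -/

import Mathlib

open Complex

/-- In the critical case `R₀ = 1`: any `y` with nonnegative real part and `y ≠ 0`
is not a root of `y² + (u+v)y + uv − uv·e^{−τy}`; consequently `y = 0` is the unique
root with nonnegative real part. -/
theorem critical_case_unique_root
    (lam m r u v k τ : ℝ)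
    (hlam : 0 < lam) (hm : 0 < m) (hr : 0 < r) (hu : 0 < u)
    (hv : 0 < v) (hk : 0 < k)
    (hR0 : m * u * v = k * lam * r) (hτ : 0 ≤ τ) :
    (∀ y : ℂ, 0 ≤ y.re → y ≠ 0 →
      y ^ 2 + ((u : ℂ) + v) * y + ((u * v : ℝ) : ℂ)
        - ((u * v : ℝ) : ℂ) * Complex.exp (-(τ : ℂ) * y) ≠ 0) ∧
    (∀ y : ℂ, 0 ≤ y.re →
      (y ^ 2 + ((u : ℂ) + v) * y + ((u * v : ℝ) : ℂ)
        - ((u * v : ℝ) : ℂ) * Complex.exp (-(τ : ℂ) * y) = 0 ↔ y = 0)) := by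
  have key : ∀ y : ℂ, 0 ≤ y.re → y ≠ 0 →
      y ^ 2 + ((u : ℂ) + v) * y + ((u * v : ℝ) : ℂ)
        - ((u * v : ℝ) : ℂ) * Complex.exp (-(τ : ℂ) * y) ≠ 0 := by
    intro y hre hy h
    have hfac : (y + u) * (y + v) = ((u * v : ℝ) : ℂ) * Complex.exp (-(τ : ℂ) * y) := by
      have h' := sub_eq_zero.mp h
      push_cast at h' ⊢
      linear_combination h'
    -- upper bound
    have habs : ‖(y + u) * (y + v)‖ ≤ u * v := by
      rw [hfac, norm_mul, Complex.norm_exp, Complex.norm_real, Real.norm_eq_abs,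
        abs_of_pos (mul_pos hu hv)]
      have h2 : Real.exp ((-(τ : ℂ) * y).re) ≤ 1 := by
        rw [Real.exp_le_one_iff]
        simp [Complex.mul_re]
        nlinarith
      nlinarith [mul_pos hu hv]
    -- lower bounds
    have hpos : 0 < y.re * y.re + y.im * y.im := by
      have := Complex.normSq_pos.mpr hy
      simpa [Complex.normSq_apply] using this
    have hlb : ∀ w : ℝ, 0 < w → w < ‖y + (w : ℂ)‖ := by
      intro w hw
      have hsq : w ^ 2 < ‖y + (w : ℂ)‖ ^ 2 := by
        rw [Complex.sq_norm, Complex.normSq_apply]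
        simp only [Complex.add_re, Complex.add_im, Complex.ofReal_re, Complex.ofReal_im,
          add_zero]
        nlinarith
      exact lt_of_pow_lt_pow_left₀ 2 (norm_nonneg _) hsq
    have h1 := hlb u hu
    have h2 := hlb v hv
    rw [norm_mul] at habs
    nlinarith [norm_nonneg (y + (u : ℂ)), norm_nonneg (y + (v : ℂ))]
  refine ⟨key, fun y hre => ⟨fun h => ?_, fun h => by simp [h]⟩⟩
  by_contra hy
  exact key y hre hy h
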